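/- The standard normal CDF Φ is log-concave on ℝ, i.e., x ↦ log Φ(x) is concave. -/

import Mathlib

open MeasureTheory Set Real Filter

noncomputable def gg (t : ℝ) : ℝ := Real.exp (-t ^ 2 / 2)
noncomputable def ff (x : ℝ) : ℝ := ∫ t in Set.Iic x, gg t

lemma gg_pos (t : ℝ) : 0 < gg t := Real.exp_pos _

lemma gg_cont : Continuous gg := by
  unfold gg; fun_prop

lemma gg_int : Integrable gg := by
  have h := integrable_exp_neg_mul_sq (b := (1:ℝ)/2) (by norm_num)
  have e : ∀ t : ℝ, -(1/2 : ℝ) * t ^ 2 = -t ^ 2 / 2 := fun t => by ring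
  simp_rw [e] at h; exact h

lemma gg_deriv (t : ℝ) : HasDerivAt gg (-t * gg t) t := by
  have h1 : HasDerivAt (fun t : ℝ => -t ^ 2 / 2) (-t) t := by
    have := ((hasDerivAt_pow 2 t).neg).div_const 2
    refine this.congr_deriv ?_; push_cast; ring
  have := h1.exp
  refine this.congr_deriv ?_
  unfold gg; ring

lemma tg_int : Integrable (fun t : ℝ => -t * gg t) := by
  have h := (integrable_mul_exp_neg_mul_sq (b := (1:ℝ)/2) (by norm_num)).neg
  have e : ∀ t : ℝ, -(1/2 : ℝ) * t ^ 2 = -t ^ 2 / 2 := fun t => by ring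
  simp_rw [e] at h
  have e2 : (fun t : ℝ => -t * gg t) = fun t => -(t * Real.exp (-t ^ 2 / 2)) := by
    funext t; unfold gg; ring
  rw [e2]; exact h

lemma gg_tendsto : Tendsto gg atBot (nhds 0) := by
  apply tendsto_of_tendsto_of_tendsto_of_le_of_le' tendsto_const_nhds Real.tendsto_exp_atBot
  · filter_upwards with t using (gg_pos t).le
  · filter_upwards [Filter.eventually_le_atBot (-2:ℝ)] with t ht
    unfold gg
    apply Real.exp_le_exp.2
    nlinarith

lemma tg_integral (x : ℝ) : ∫ t in Set.Iic x, (-t * gg t) = gg x := by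
  have := integral_Iic_of_hasDerivAt_of_tendsto' (f := gg) (f' := fun t => -t * gg t)
    (a := x) (m := 0) (fun t _ => gg_deriv t) tg_int.integrableOn gg_tendsto
  rw [this, sub_zero]

lemma ff_pos (x : ℝ) : 0 < ff x := by
  unfold ff
  rw [setIntegral_pos_iff_support_of_nonneg_ae]
  · have : Function.support gg = Set.univ := by
      ext t; simp [Function.support, (gg_pos t).ne']
    rw [this, Set.univ_inter]
    simp [Real.volume_Iic]
  · filter_upwards with t using (gg_pos t).le
  · exact gg_int.integrableOn

lemma ff_deriv (x : ℝ) : HasDerivAt ff (gg x) x := by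
  have heq : ff = fun x => ff 0 + ∫ t in (0:ℝ)..x, gg t := by
    funext y
    unfold ff
    rw [← intervalIntegral.integral_Iic_sub_Iic gg_int.integrableOn gg_int.integrableOn]
    ring
  rw [heq]
  exact (hasDerivAt_const x (ff 0)).add
    (intervalIntegral.integral_hasDerivAt_right (gg_int.intervalIntegrable)
      (gg_cont.stronglyMeasurableAtFilter _ _) gg_cont.continuousAt) |>.congr_deriv (by ring)

lemma key (x : ℝ) : -x * ff x ≤ gg x := by
  rcases le_or_gt 0 x with hx | hx
  · have : -x * ff x ≤ 0 :=
      mul_nonpos_of_nonpos_of_nonneg (by linarith) (ff_pos x).le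
    linarith [gg_pos x]
  · have h1 : -x * ff x = ∫ t in Set.Iic x, -x * gg t := by
      unfold ff; rw [MeasureTheory.integral_const_mul]
    rw [h1, ← tg_integral x]
    apply setIntegral_mono_on (gg_int.integrableOn.const_mul _) tg_int.integrableOn
      measurableSet_Iic
    intro t ht
    have ht' : t ≤ x := ht
    have : -x ≤ -t := by linarith
    exact mul_le_mul_of_nonneg_right this (gg_pos t).le

/-- The standard normal CDF `Φ` is log-concave on `ℝ`: `x ↦ log Φ(x)` is concave. -/
theorem stmt_2 (Φ : ℝ → ℝ)
    (hΦ : ∀ x, Φ x = (1 / Real.sqrt (2 * Real.pi)) * ∫ t in Set.Iic x, Real.exp (-t ^ 2 / 2)) :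
    ConcaveOn ℝ Set.univ (fun x => Real.log (Φ x)) := by
  have hc : (0:ℝ) < 1 / Real.sqrt (2 * Real.pi) := by positivity
  have hΦ' : ∀ x, Φ x = (1 / Real.sqrt (2 * Real.pi)) * ff x := hΦ
  have hL : (fun x => Real.log (Φ x)) =
      fun x => Real.log (1 / Real.sqrt (2 * Real.pi)) + Real.log (ff x) := by
    funext x
    rw [hΦ' x, Real.log_mul hc.ne' (ff_pos x).ne']
  rw [hL]
  have hLd : ∀ x, HasDerivAt (fun x => Real.log (ff x)) (gg x / ff x) x :=
    fun x => (ff_deriv x).log (ff_pos x).ne'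
  have hderiv1 : deriv (fun x => Real.log (ff x)) = fun x => gg x / ff x :=
    funext fun x => (hLd x).deriv
  have hLd2 : ∀ x, HasDerivAt (fun x => gg x / ff x)
      ((-x * gg x * ff x - gg x * gg x) / ff x ^ 2) x :=
    fun x => (gg_deriv x).div (ff_deriv x) (ff_pos x).ne'
  have hconc : ConcaveOn ℝ Set.univ (fun x => Real.log (ff x)) := by
    apply concaveOn_univ_of_deriv2_nonpos
    · exact fun x => (hLd x).differentiableAt
    · rw [hderiv1]; exact fun x => (hLd2 x).differentiableAt
    · intro x
      have h2 : deriv^[2] (fun x => Real.log (ff x)) x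
          = (-x * gg x * ff x - gg x * gg x) / ff x ^ 2 := by
        simp only [Function.iterate_succ, Function.iterate_zero, Function.comp_apply,
          id_eq, hderiv1]
        exact (hLd2 x).deriv
      rw [h2]
      apply div_nonpos_of_nonpos_of_nonneg _ (sq_nonneg _)
      have := key x
      nlinarith [gg_pos x, ff_pos x]
  exact (concaveOn_const _ convex_univ).add hconc
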